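/- Let d ∈ ℕ, n ≥ 1, 0 < α₁ ≤ … ≤ α_n. Then for all non-negative measurable functions f₁, …, f_{d+2n+1} on ℝ^{d+2n}, ∫_{ℝ^{d+2n+1}} ∏_{j=1}^{d+2n+1} f_j(π_j(x,t)) dx dt ≤ ∏_{j=1}^{d+2n+1} ‖f_j‖_{d+2n} (the nonlinear Loomis–Whitney inequality on H(d,α) with constant 1). -/

import Mathlib

open MeasureTheory ENNReal

/-- Delete the `j`-th coordinate of `x : ℝ^k` and append `s` as the last coordinate,
identifying `ℝ^{k-1} × ℝ` with `ℝ^k`. -/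
noncomputable def deleteInsert {k : ℕ} (j : Fin k) (x : Fin k → ℝ) (s : ℝ) : Fin k → ℝ :=
  fun i => if _ : (i : ℕ) + 1 = k then s
    else if _ : (i : ℕ) < (j : ℕ) then x i
    else x ⟨(i : ℕ) + 1, by have := i.isLt; omega⟩

/-- The quadratic correction term in the `j`-th projection on the corank 1 Carnot group. -/
noncomputable def tshift (d n : ℕ) (α : Fin n → ℝ) (j : Fin (d + 2*n))
    (x : Fin (d + 2*n) → ℝ) : ℝ :=
  if _ : (j : ℕ) < d then 0
  else (if ((j : ℕ) - d) % 2 = 0 then (1:ℝ) else -1) *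
      (α ⟨((j : ℕ) - d) / 2, by have := j.isLt; omega⟩ / 2) *
      x ⟨d + 2 * (((j : ℕ) - d) / 2), by have := j.isLt; omega⟩ *
      x ⟨d + 2 * (((j : ℕ) - d) / 2) + 1, by have := j.isLt; omega⟩

/-- The `j`-th projection `π_j : H(d,α) → ℝ^{d+2n}` (for `1 ≤ j ≤ d+2n` in 1-based
numbering), where the target `ℝ^{d+2n-1} × ℝ` is identified with `ℝ^{d+2n}` by
placing `x̂_j` in the first `d+2n-1` slots and the (shifted) `t`-variable in the
last slot. -/
noncomputable def carnotProj (d n : ℕ) (α : Fin n → ℝ) (j : Fin (d + 2*n))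
    (p : (Fin (d + 2*n) → ℝ) × ℝ) : Fin (d + 2*n) → ℝ :=
  deleteInsert j p.1 (p.2 + tshift d n α j p.1)


/-- All `d+2n+1` projections, the last one being `π_{d+2n+1}(x,t) = x`. -/
noncomputable def carnotProjFull (d n : ℕ) (α : Fin n → ℝ) (j : Fin (d + 2*n + 1))
    (p : (Fin (d + 2*n) → ℝ) × ℝ) : Fin (d + 2*n) → ℝ :=
  if h : (j : ℕ) < d + 2*n then carnotProj d n α ⟨j, h⟩ p else p.1

theorem deleteInsert_eq {M : ℕ} (j : Fin (M+1)) (x : Fin (M+1) → ℝ) (s : ℝ) :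
    deleteInsert j x s = Fin.snoc (fun k : Fin M => x (j.succAbove k)) s := by
  funext i
  induction i using Fin.lastCases with
  | last =>
    rw [Fin.snoc_last, deleteInsert, dif_pos (by simp)]
  | cast k =>
    rw [Fin.snoc_castSucc, deleteInsert,
      dif_neg (by simp only [Fin.coe_castSucc]; omega)]
    by_cases hkj : ((Fin.castSucc k : Fin (M+1)) : ℕ) < (j : ℕ)
    · rw [dif_pos hkj, Fin.succAbove_of_castSucc_lt _ _ (by rwa [Fin.lt_def])]
    · rw [dif_neg hkj, Fin.succAbove_of_le_castSucc _ _ (by rw [Fin.le_def]; omega)]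
      rfl

theorem lmarg_compl {M : ℕ} (j : Fin (M + 1)) (φ : (Fin M → ℝ) → ℝ≥0∞) (hφ : Measurable φ)
    (x₀ : Fin (M + 1) → ℝ) :
    (∫⋯∫⁻_({j}ᶜ), (fun x => φ (fun k => x (j.succAbove k)))
      ∂(fun _ : Fin (M+1) => (volume : Measure ℝ))) x₀
      = ∫⁻ w : Fin M → ℝ, φ w := by
  have hmem : ∀ k : Fin M, j.succAbove k ∈ ({j}ᶜ : Finset (Fin (M+1))) := fun k =>
    Finset.mem_compl.mpr (by simp [Fin.succAbove_ne])
  let e : Fin M ≃ ({j}ᶜ : Finset (Fin (M+1))) :=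
    (finSuccAboveEquiv j).trans (Equiv.subtypeEquivRight (fun x => by simp))
  have he : ∀ k, (e k : Fin (M+1)) = j.succAbove k := fun k => rfl
  rw [lmarginal]
  have h1 : ∀ (y : ∀ i : ({j}ᶜ : Finset (Fin (M+1))), ℝ),
      (fun k => Function.updateFinset x₀ ({j}ᶜ) y (j.succAbove k)) = fun k => y (e k) := by
    intro y
    funext k
    simp only [Function.updateFinset]
    rw [dif_pos (hmem k)]
    exact congrArg y (Subtype.ext (he k).symm)
  simp_rw [h1]
  have hMP := measurePreserving_piCongrLeft (fun _ : ({j}ᶜ : Finset (Fin (M+1))) =>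
    (volume : Measure ℝ)) e
  have hF : Measurable (fun y : (∀ _ : ({j}ᶜ : Finset (Fin (M+1))), ℝ) => φ (fun k => y (e k))) :=
    hφ.comp (measurable_pi_lambda _ (fun k => measurable_pi_apply (e k)))
  rw [← hMP.lintegral_comp hF]
  rw [volume_pi]
  congr 1
  funext w
  congr 1
  funext k
  rw [MeasurableEquiv.coe_piCongrLeft, Equiv.piCongrLeft_apply_apply]

theorem snocMP {M : ℕ} :
    MeasurePreserving (fun p : (Fin M → ℝ) × ℝ => Fin.snoc p.1 p.2)
      ((Measure.pi fun _ : Fin M => (volume : Measure ℝ)).prod volume)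
      (Measure.pi fun _ : Fin (M+1) => (volume : Measure ℝ)) := by
  have h1 := MeasurePreserving.symm _
    (measurePreserving_piFinSuccAbove (fun _ : Fin (M+1) => (volume : Measure ℝ)) (Fin.last M))
  have h2 : MeasurePreserving (Prod.swap : (Fin M → ℝ) × ℝ → ℝ × (Fin M → ℝ))
      ((Measure.pi fun _ : Fin M => (volume : Measure ℝ)).prod volume)
      (volume.prod (Measure.pi fun _ : Fin M => (volume : Measure ℝ))) :=
    Measure.measurePreserving_swap
  have h3 := h1.comp h2
  have : ((MeasurableEquiv.piFinSuccAbove (fun _ : Fin (M+1) => ℝ) (Fin.last M)).symm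
      ∘ Prod.swap) = fun p : (Fin M → ℝ) × ℝ => Fin.snoc p.1 p.2 := by
    funext p
    show (Fin.insertNthEquiv (fun _ => ℝ) (Fin.last M)) (p.2, p.1) = Fin.snoc p.1 p.2
    simp [Fin.insertNthEquiv, Fin.insertNth_last']
  rwa [this] at h3

theorem measurable_deleteInsert {M : ℕ} (j : Fin (M+1)) :
    Measurable (fun p : (Fin (M+1) → ℝ) × ℝ => deleteInsert j p.1 p.2) := by
  apply measurable_pi_lambda
  intro i
  simp_rw [deleteInsert_eq]
  induction i using Fin.lastCases with
  | last => simp_rw [Fin.snoc_last]; exact measurable_snd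
  | cast k =>
    simp_rw [Fin.snoc_castSucc]
    exact (measurable_pi_apply _).comp measurable_fst

theorem snocMP' {M : ℕ} :
    MeasurePreserving (fun p : (Fin M → ℝ) × ℝ => Fin.snoc p.1 p.2)
      (volume : Measure ((Fin M → ℝ) × ℝ)) (volume : Measure (Fin (M+1) → ℝ)) := by
  have h := snocMP (M := M)
  rwa [show Measure.pi (fun _ : Fin M => (volume : Measure ℝ)) = volume from volume_pi.symm,
    show Measure.pi (fun _ : Fin (M+1) => (volume : Measure ℝ)) = volume from volume_pi.symm,
    ← Measure.volume_eq_prod] at h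
variable {δ : Type*} [DecidableEq δ] {π : δ → Type*} [∀ i, MeasurableSpace (π i)]

/-- Abstract multi-function Loomis–Whitney inequality, finset induction form. -/
theorem lw_aux (μ : ∀ i, Measure (π i)) [∀ i, SigmaFinite (μ i)] (s : Finset δ)
    (hs : 2 ≤ s.card) (G : δ → (∀ i, π i) → ℝ≥0∞)
    (hG : ∀ i ∈ s, Measurable (G i))
    (hind : ∀ i ∈ s, ∀ x y, G i (Function.update x i y) = G i x) (x : ∀ i, π i) :
    (∫⋯∫⁻_s, (fun z => ∏ i ∈ s, G i z) ∂μ) x ≤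
      ∏ i ∈ s, ((∫⋯∫⁻_(s.erase i), (fun z => G i z ^ ((s.card : ℝ) - 1)) ∂μ) x)
        ^ (((s.card : ℝ) - 1)⁻¹) := by
  induction s using Finset.strongInduction generalizing G x with
  | _ s ih =>
  rcases eq_or_lt_of_le hs with h2 | h3
  · -- base case : two indices
    obtain ⟨a, b, hab, rfl⟩ := Finset.card_eq_two.mp h2.symm
    have ha : a ∈ ({a, b} : Finset δ) := by simp
    have hb : b ∈ ({a, b} : Finset δ) := by simp
    have hGa := hG a ha
    have hGb := hG b hb
    have hea : ({a, b} : Finset δ).erase a = {b} := by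
      rw [show ({a, b} : Finset δ) = insert a {b} from rfl,
        Finset.erase_insert (by simpa using hab)]
    have heb : ({a, b} : Finset δ).erase b = {a} := by
      rw [Finset.pair_comm, show ({b, a} : Finset δ) = insert b {a} from rfl,
        Finset.erase_insert (by simpa using hab.symm)]
    have hcard : ((({a, b} : Finset δ).card : ℝ)) - 1 = 1 := by rw [← h2]; norm_num
    rw [hcard]
    simp only [ENNReal.rpow_one, inv_one, Finset.prod_pair hab, hea, heb]
    rw [show ({a, b} : Finset δ) = insert a {b} from rfl,
      lmarginal_insert (fun z => G a z * G b z) (hGa.mul hGb) (i := a) (s := {b}) (by simpa using hab)]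
    simp only [lmarginal_singleton]
    have key : ∀ ya, (∫⁻ yb, G a (Function.update (Function.update x a ya) b yb) *
        G b (Function.update (Function.update x a ya) b yb) ∂μ b)
        = (∫⁻ yb, G a (Function.update x b yb) ∂μ b) * G b (Function.update x a ya) := by
      intro ya
      have : ∀ yb, G a (Function.update (Function.update x a ya) b yb) *
          G b (Function.update (Function.update x a ya) b yb)
          = G a (Function.update x b yb) * G b (Function.update x a ya) := by
        intro yb
        rw [hind b hb, Function.update_comm hab, hind a ha]
      simp_rw [this]
      rw [lintegral_mul_const _
        (show Measurable fun yb => G a (Function.update x b yb) from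
          hGa.comp (measurable_update _))]
    simp_rw [key]
    rw [lintegral_const_mul _
      (show Measurable fun ya => G b (Function.update x a ya) from
        hGb.comp (measurable_update _))]
  · -- inductive step
    obtain ⟨i, hi⟩ := Finset.card_pos.mp (by omega : 0 < s.card)
    have hcard' : (s.erase i).card = s.card - 1 := Finset.card_erase_of_mem hi
    set k := (s.erase i).card with hkdef
    have hk : 2 ≤ k := by omega
    have hk0 : (k : ℝ) ≠ 0 := by positivity
    have hk1 : (1 : ℝ) < k := by exact_mod_cast hk
    have hkm1 : (k : ℝ) - 1 ≠ 0 := by linarith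
    have hkm1' : (0:ℝ) ≤ (k : ℝ) - 1 := by linarith
    have hkR : (s.card : ℝ) - 1 = (k : ℝ) := by
      have : s.card = k + 1 := by omega
      rw [this]; push_cast; ring
    rw [hkR]
    set H : δ → (∀ i, π i) → ℝ≥0∞ :=
      fun j => ∫⋯∫⁻_{i}, (fun z => G j z ^ (k : ℝ)) ∂μ with hHdef
    have hHmeas : ∀ j ∈ s, Measurable (H j) :=
      fun j hj => ((hG j hj).pow_const _).lmarginal μ
    have hHsingle : ∀ j, ∀ z, H j z = ∫⁻ t, G j (Function.update z i t) ^ (k : ℝ) ∂μ i := by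
      intro j z; simp only [hHdef, lmarginal_singleton]
    have hHind : ∀ j ∈ s.erase i, ∀ z y, H j (Function.update z j y) = H j z := by
      intro j hj z y
      have hji : j ∉ ({i} : Finset δ) := by
        simpa using (Finset.mem_erase.mp hj).1
      simp only [hHdef]
      rw [lmarginal_update_of_notMem ((hG j (Finset.mem_of_mem_erase hj)).pow_const _) hji]
      congr 1
      funext w
      simp only [Function.comp_apply]
      rw [hind j (Finset.mem_of_mem_erase hj)]
    set Q : (∀ i, π i) → ℝ≥0∞ := fun z => ∏ j ∈ s.erase i, H j z ^ (k : ℝ)⁻¹ with hQdef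
    have hQmeas : Measurable Q :=
      Finset.measurable_prod _ (fun j hj => (hHmeas j (Finset.mem_of_mem_erase hj)).pow_const _)
    have hFmeas : Measurable (fun z => ∏ j ∈ s, G j z) :=
      Finset.measurable_prod _ (fun j hj => hG j hj)
    -- Step 1 : peel off the i-th integral and apply Hölder in that variable
    have step1 : ∀ z, (∫⁻ t, (∏ j ∈ s, G j (Function.update z i t)) ∂μ i)
        ≤ G i z * Q z := by
      intro z
      have hrw : ∀ t, (∏ j ∈ s, G j (Function.update z i t))
          = G i z * ∏ j ∈ s.erase i, G j (Function.update z i t) := by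
        intro t
        rw [← Finset.mul_prod_erase s _ hi, hind i hi]
      simp_rw [hrw]
      rw [lintegral_const_mul _
        (show Measurable fun t => ∏ j ∈ s.erase i, G j (Function.update z i t) from
          Finset.measurable_prod _ (fun j hj =>
            (hG j (Finset.mem_of_mem_erase hj)).comp (measurable_update _)))]
      gcongr
      calc ∫⁻ t, ∏ j ∈ s.erase i, G j (Function.update z i t) ∂μ i
          = ∫⁻ t, ∏ j ∈ s.erase i, (G j (Function.update z i t) ^ (k : ℝ)) ^ (k : ℝ)⁻¹ ∂μ i := by
            congr 1; funext t
            refine Finset.prod_congr rfl (fun j _ => ?_)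
            rw [← ENNReal.rpow_mul, mul_inv_cancel₀ hk0, ENNReal.rpow_one]
        _ ≤ ∏ j ∈ s.erase i, (∫⁻ t, G j (Function.update z i t) ^ (k : ℝ) ∂μ i) ^ (k : ℝ)⁻¹ := by
            apply ENNReal.lintegral_prod_norm_pow_le
            · intro j hj
              exact (((hG j (Finset.mem_of_mem_erase hj)).comp
                (measurable_update _)).pow_const _).aemeasurable
            · rw [Finset.sum_const, ← hkdef, nsmul_eq_mul, mul_inv_cancel₀ hk0]
            · intro j _; positivity
        _ = Q z := by
            rw [hQdef]
            exact Finset.prod_congr rfl (fun j _ => by rw [hHsingle])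
    -- Step 2 : Hölder inside the iterated integral
    have step2 : (∫⋯∫⁻_(s.erase i), (fun z => G i z * Q z) ∂μ) x ≤
        ((∫⋯∫⁻_(s.erase i), (fun z => G i z ^ (k : ℝ)) ∂μ) x) ^ (k : ℝ)⁻¹ *
        ((∫⋯∫⁻_(s.erase i), (fun z => Q z ^ ((k : ℝ) / ((k : ℝ) - 1))) ∂μ) x)
          ^ (((k : ℝ) - 1) / (k : ℝ)) := by
      have hpq : Real.HolderConjugate (k : ℝ) ((k : ℝ) / ((k : ℝ) - 1)) := by
        rw [Real.holderConjugate_iff]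
        constructor
        · exact hk1
        · rw [inv_div]
          field_simp
          ring
      have h1 : (1 : ℝ) / (k : ℝ) = (k : ℝ)⁻¹ := one_div _
      have h2 : (1 : ℝ) / ((k : ℝ) / ((k : ℝ) - 1)) = ((k : ℝ) - 1) / (k : ℝ) := by
        rw [one_div, inv_div]
      simp only [lmarginal]
      have := ENNReal.lintegral_mul_le_Lp_mul_Lq
        (μ := Measure.pi fun j : (s.erase i : Finset δ) => μ j) hpq
        (f := fun y => G i (Function.updateFinset x (s.erase i) y))
        (g := fun y => Q (Function.updateFinset x (s.erase i) y))
        (((hG i hi).comp measurable_updateFinset).aemeasurable)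
        ((hQmeas.comp measurable_updateFinset).aemeasurable)
      rw [h1, h2] at this
      simp only [Pi.mul_apply] at this
      exact this
    -- Step 3 : apply the induction hypothesis
    have hsub : s.erase i ⊂ s := Finset.erase_ssubset hi
    have hQpow : (fun z => Q z ^ ((k : ℝ) / ((k : ℝ) - 1)))
        = fun z => ∏ j ∈ s.erase i, H j z ^ ((k : ℝ) - 1)⁻¹ := by
      funext z
      rw [hQdef]
      rw [← ENNReal.prod_rpow_of_nonneg
        (div_nonneg (by positivity) hkm1' : (0:ℝ) ≤ (k : ℝ) / ((k : ℝ) - 1))]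
      refine Finset.prod_congr rfl (fun j _ => ?_)
      rw [← ENNReal.rpow_mul]
      congr 1
      field_simp
    have hcards' : (((s.erase i).card : ℝ)) - 1 = (k : ℝ) - 1 := by rw [hkdef]
    have IH := ih (s.erase i) hsub (by omega) (fun j z => H j z ^ ((k : ℝ) - 1)⁻¹)
      (fun j hj => (hHmeas j (Finset.mem_of_mem_erase hj)).pow_const _)
      (fun j hj z y => by rw [hHind j hj]) x
    rw [hcards'] at IH
    have hHpow : ∀ j ∈ s.erase i,
        (fun z => (H j z ^ ((k : ℝ) - 1)⁻¹) ^ ((k : ℝ) - 1)) = H j := by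
      intro j hj
      funext z
      rw [← ENNReal.rpow_mul, inv_mul_cancel₀ hkm1, ENNReal.rpow_one]
    have hmerge : ∀ j ∈ s.erase i, (∫⋯∫⁻_((s.erase i).erase j), H j ∂μ)
        = ∫⋯∫⁻_(s.erase j), (fun z => G j z ^ (k : ℝ)) ∂μ := by
      intro j hj
      have hij : j ≠ i := (Finset.mem_erase.mp hj).1
      have hdisj : Disjoint ((s.erase i).erase j) ({i} : Finset δ) := by
        rw [Finset.disjoint_singleton_right]
        intro hmem
        exact (Finset.mem_erase.mp (Finset.mem_of_mem_erase hmem)).1 rfl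
      have hset : ((s.erase i).erase j) ∪ ({i} : Finset δ) = s.erase j := by
        ext a
        simp only [Finset.mem_union, Finset.mem_erase, Finset.mem_singleton]
        constructor
        · rintro (⟨haj, _, has⟩ | rfl)
          · exact ⟨haj, has⟩
          · exact ⟨fun h => hij h.symm, hi⟩
        · rintro ⟨haj, has⟩
          by_cases hai : a = i
          · right; exact hai
          · left; exact ⟨haj, hai, has⟩
      rw [show H j = ∫⋯∫⁻_{i}, (fun z => G j z ^ (k : ℝ)) ∂μ from rfl,
        ← lmarginal_union μ _ ((hG j (Finset.mem_of_mem_erase hj)).pow_const _) hdisj, hset]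
    have hpeel : (∫⋯∫⁻_s, (fun z => ∏ j ∈ s, G j z) ∂μ)
        = ∫⋯∫⁻_(s.erase i), (fun z => ∫⁻ t, (∏ j ∈ s, G j (Function.update z i t)) ∂μ i) ∂μ := by
      have h := lmarginal_insert' (μ := μ) (fun z => ∏ j ∈ s, G j z) hFmeas
        (i := i) (s := s.erase i) (Finset.notMem_erase i s)
      rwa [Finset.insert_erase hi] at h
    -- Assemble
    calc (∫⋯∫⁻_s, (fun z => ∏ j ∈ s, G j z) ∂μ) x
        = (∫⋯∫⁻_(s.erase i),
            (fun z => ∫⁻ t, (∏ j ∈ s, G j (Function.update z i t)) ∂μ i) ∂μ) x := by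
          rw [hpeel]
      _ ≤ (∫⋯∫⁻_(s.erase i), (fun z => G i z * Q z) ∂μ) x := lmarginal_mono (fun z => step1 z) x
      _ ≤ ((∫⋯∫⁻_(s.erase i), (fun z => G i z ^ (k : ℝ)) ∂μ) x) ^ (k : ℝ)⁻¹ *
          ((∫⋯∫⁻_(s.erase i), (fun z => Q z ^ ((k : ℝ) / ((k : ℝ) - 1))) ∂μ) x)
            ^ (((k : ℝ) - 1) / (k : ℝ)) := step2
      _ ≤ ((∫⋯∫⁻_(s.erase i), (fun z => G i z ^ (k : ℝ)) ∂μ) x) ^ (k : ℝ)⁻¹ *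
          (∏ j ∈ s.erase i, ((∫⋯∫⁻_(s.erase j), (fun z => G j z ^ (k : ℝ)) ∂μ) x)
            ^ ((k : ℝ) - 1)⁻¹) ^ (((k : ℝ) - 1) / (k : ℝ)) := by
          refine mul_le_mul_right (ENNReal.rpow_le_rpow ?_ (div_nonneg hkm1' (by positivity))) _
          rw [hQpow]
          refine IH.trans (le_of_eq ?_)
          refine Finset.prod_congr rfl (fun j hj => ?_)
          rw [show (∫⋯∫⁻_((s.erase i).erase j),
              (fun z => (H j z ^ ((k:ℝ)-1)⁻¹) ^ ((k : ℝ) - 1)) ∂μ)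
              = ∫⋯∫⁻_((s.erase i).erase j), H j ∂μ by rw [hHpow j hj], hmerge j hj]
      _ = ∏ j ∈ s, ((∫⋯∫⁻_(s.erase j), (fun z => G j z ^ (k : ℝ)) ∂μ) x) ^ (k : ℝ)⁻¹ := by
          rw [← ENNReal.prod_rpow_of_nonneg (div_nonneg hkm1' (by positivity) :
            (0:ℝ) ≤ ((k:ℝ)-1)/(k:ℝ))]
          rw [Finset.prod_congr rfl (fun j (hj : j ∈ s.erase i) => by
            rw [← ENNReal.rpow_mul]
            congr 1
            field_simp :
            ∀ j ∈ s.erase i, (((∫⋯∫⁻_(s.erase j), (fun z => G j z ^ (k : ℝ)) ∂μ) x)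
              ^ ((k : ℝ) - 1)⁻¹) ^ (((k : ℝ) - 1) / (k : ℝ))
              = ((∫⋯∫⁻_(s.erase j), (fun z => G j z ^ (k : ℝ)) ∂μ) x) ^ (k : ℝ)⁻¹)]
          exact Finset.mul_prod_erase s
            (fun j => ((∫⋯∫⁻_(s.erase j), (fun z => G j z ^ (k : ℝ)) ∂μ) x) ^ (k : ℝ)⁻¹) hi

theorem master (m : ℕ) (hm : 2 ≤ m)
    (F : Fin m → (Fin m → ℝ) → ℝ≥0∞) (hF : ∀ j, Measurable (F j))
    (G : (Fin m → ℝ) → ℝ≥0∞) (hG : Measurable G)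
    (c : Fin m → (Fin m → ℝ) → ℝ) (hc : ∀ j, Measurable (c j)) :
    ∫⁻ p : (Fin m → ℝ) × ℝ,
        (∏ j, F j (deleteInsert j p.1 (p.2 + c j p.1))) * G p.1 ≤
      (∏ j, (∫⁻ y, F j y ^ (m : ℝ)) ^ (m : ℝ)⁻¹) * (∫⁻ y, G y ^ (m : ℝ)) ^ (m : ℝ)⁻¹ := by
  obtain ⟨M, rfl⟩ : ∃ M, m = M + 1 := ⟨m - 1, by omega⟩
  have hM : 1 ≤ M := by omega
  set r : ℝ := ((M + 1 : ℕ) : ℝ) with hrdef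
  have hr : r = (M : ℝ) + 1 := by rw [hrdef]; push_cast; ring
  have hMpos : (0:ℝ) < (M:ℝ) := by exact_mod_cast hM
  have hM0 : (M : ℝ) ≠ 0 := ne_of_gt hMpos
  have hr0 : r ≠ 0 := by rw [hr]; positivity
  have hr1 : 1 < r := by rw [hr]; linarith
  -- measurability helpers
  have hdi : ∀ j : Fin (M+1), Measurable
      (fun p : (Fin (M+1) → ℝ) × ℝ => deleteInsert j p.1 (p.2 + c j p.1)) := fun j =>
    (measurable_deleteInsert j).comp
      (measurable_fst.prodMk (measurable_snd.add ((hc j).comp measurable_fst)))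
  have hbig : Measurable (fun p : (Fin (M+1) → ℝ) × ℝ =>
      (∏ j, F j (deleteInsert j p.1 (p.2 + c j p.1))) * G p.1) :=
    (Finset.measurable_prod _ (fun j _ => (hF j).comp (hdi j))).mul (hG.comp measurable_fst)
  -- the key quantities
  set Mj : Fin (M+1) → (Fin (M+1) → ℝ) → ℝ≥0∞ :=
    fun j x => ∫⁻ s, F j (deleteInsert j x s) ^ r with hMjdef
  have hMj : ∀ j, Measurable (Mj j) := fun j =>
    Measurable.lintegral_prod_right' (((hF j).comp (measurable_deleteInsert j)).pow_const r)
  have hdix : ∀ (j : Fin (M+1)) (x : Fin (M+1) → ℝ),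
      Measurable (fun t : ℝ => deleteInsert j x (t + c j x)) := fun j x =>
    (measurable_deleteInsert j).comp
      (measurable_const.prodMk (measurable_id.add_const _))
  -- Step A : Fubini
  have hA : ∫⁻ p : (Fin (M+1) → ℝ) × ℝ,
        (∏ j, F j (deleteInsert j p.1 (p.2 + c j p.1))) * G p.1
      = ∫⁻ x, ∫⁻ t, (∏ j, F j (deleteInsert j x (t + c j x))) * G x := by
    rw [Measure.volume_eq_prod, lintegral_prod _ hbig.aemeasurable]
  -- Step B : Hölder in the t variable plus translation invariance
  have stepB : ∀ x, (∫⁻ t, (∏ j, F j (deleteInsert j x (t + c j x))) * G x)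
      ≤ G x * ∏ j, Mj j x ^ r⁻¹ := by
    intro x
    have hPmeas : Measurable (fun t : ℝ => ∏ j, F j (deleteInsert j x (t + c j x))) :=
      Finset.measurable_prod _ (fun j _ => (hF j).comp (hdix j x))
    rw [lintegral_mul_const _ hPmeas, mul_comm]
    refine mul_le_mul_right ?_ (G x)
    calc ∫⁻ t, ∏ j, F j (deleteInsert j x (t + c j x))
        = ∫⁻ t, ∏ j, (F j (deleteInsert j x (t + c j x)) ^ r) ^ r⁻¹ := by
          refine lintegral_congr fun t => Finset.prod_congr rfl fun j _ => ?_
          rw [← ENNReal.rpow_mul, mul_inv_cancel₀ hr0, ENNReal.rpow_one]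
      _ ≤ ∏ j, (∫⁻ t, F j (deleteInsert j x (t + c j x)) ^ r) ^ r⁻¹ := by
          apply ENNReal.lintegral_prod_norm_pow_le
          · exact fun j _ => (((hF j).comp (hdix j x)).pow_const _).aemeasurable
          · rw [Finset.sum_const, Finset.card_univ, Fintype.card_fin, nsmul_eq_mul,
              ← hrdef, mul_inv_cancel₀ hr0]
          · intro j _; positivity
      _ = ∏ j, Mj j x ^ r⁻¹ := by
          refine Finset.prod_congr rfl fun j _ => ?_
          congr 1
          exact lintegral_add_right_eq_self (fun s => F j (deleteInsert j x s) ^ r) (c j x)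
  -- Step C : Hölder on ℝ^(M+1)
  have hPw : Measurable (fun x => ∏ j, Mj j x ^ r⁻¹) :=
    Finset.measurable_prod _ (fun j _ => (hMj j).pow_const _)
  have stepC : (∫⁻ x, G x * ∏ j, Mj j x ^ r⁻¹)
      ≤ (∫⁻ y, G y ^ r) ^ r⁻¹ * (∫⁻ x, ∏ j, Mj j x ^ (M:ℝ)⁻¹) ^ ((M:ℝ)/r) := by
    have hpq : Real.HolderConjugate r (r / (M:ℝ)) := by
      rw [Real.holderConjugate_iff]
      constructor
      · exact hr1
      · rw [inv_div, hr]; field_simp; ring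
    have h := ENNReal.lintegral_mul_le_Lp_mul_Lq volume hpq hG.aemeasurable hPw.aemeasurable
    simp only [Pi.mul_apply] at h
    have h1 : (1 : ℝ) / r = r⁻¹ := one_div _
    have h2 : (1 : ℝ) / (r / (M:ℝ)) = (M:ℝ)/r := by rw [one_div, inv_div]
    rw [h1, h2] at h
    refine h.trans (le_of_eq ?_)
    congr 1
    congr 1
    refine lintegral_congr fun x => ?_
    rw [← ENNReal.prod_rpow_of_nonneg (div_nonneg (by positivity) hMpos.le)]
    refine Finset.prod_congr rfl fun j _ => ?_
    rw [← ENNReal.rpow_mul]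
    congr 1
    field_simp
  -- Step D : Loomis–Whitney on ℝ^(M+1)
  have stepD : (∫⁻ x, ∏ j, Mj j x ^ (M:ℝ)⁻¹)
      ≤ ∏ j, (∫⁻ y, F j y ^ r) ^ (M:ℝ)⁻¹ := by
    have hind : ∀ (j : Fin (M+1)) (z : Fin (M+1) → ℝ) (y : ℝ),
        Mj j (Function.update z j y) = Mj j z := by
      intro j z y
      simp only [hMjdef]
      refine lintegral_congr fun s => ?_
      have hupd : (fun k : Fin M => Function.update z j y (j.succAbove k))
          = fun k : Fin M => z (j.succAbove k) := by
        funext k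
        rw [Function.update_of_ne (Fin.succAbove_ne j k)]
      rw [deleteInsert_eq, deleteInsert_eq, hupd]
    have hlw := lw_aux (fun _ : Fin (M+1) => (volume : Measure ℝ)) Finset.univ
      (by rw [Finset.card_univ, Fintype.card_fin]; omega)
      (fun j z => Mj j z ^ (M:ℝ)⁻¹)
      (fun j _ => (hMj j).pow_const _)
      (fun j _ z y => by rw [hind j z y])
      (fun _ => 0)
    have hcard : (((Finset.univ : Finset (Fin (M+1))).card : ℝ)) - 1 = (M:ℝ) := by
      rw [Finset.card_univ, Fintype.card_fin]; push_cast; ring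
    rw [hcard] at hlw
    calc (∫⁻ x, ∏ j, Mj j x ^ (M:ℝ)⁻¹)
        = (∫⋯∫⁻_Finset.univ, (fun z => ∏ j, Mj j z ^ (M:ℝ)⁻¹)
            ∂(fun _ : Fin (M+1) => (volume : Measure ℝ))) (fun _ => 0) := by
          rw [show (volume : Measure (Fin (M+1) → ℝ))
            = Measure.pi fun _ => volume from volume_pi,
            lintegral_eq_lmarginal_univ (fun _ => (0:ℝ))]
      _ ≤ ∏ j, ((∫⋯∫⁻_(Finset.univ.erase j),
            (fun z => (Mj j z ^ (M:ℝ)⁻¹) ^ (M:ℝ)) ∂(fun _ => volume)) (fun _ => 0)) ^ (M:ℝ)⁻¹ :=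
          hlw
      _ = ∏ j, (∫⁻ y, F j y ^ r) ^ (M:ℝ)⁻¹ := by
          refine Finset.prod_congr rfl fun j _ => ?_
          congr 1
          have hsimp : (fun z => (Mj j z ^ (M:ℝ)⁻¹) ^ (M:ℝ)) = Mj j := by
            funext z
            rw [← ENNReal.rpow_mul, inv_mul_cancel₀ hM0, ENNReal.rpow_one]
          rw [hsimp]
          have herase : Finset.univ.erase j = ({j}ᶜ : Finset (Fin (M+1))) := by
            ext a; simp [Finset.mem_erase, Finset.mem_compl]
          rw [herase]
          set φj : (Fin M → ℝ) → ℝ≥0∞ := fun w => ∫⁻ s, F j (Fin.snoc w s) ^ r with hφjdef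
          have hφj : Measurable φj :=
            Measurable.lintegral_prod_right' (((hF j).comp snocMP'.measurable).pow_const r)
          have hMjφ : Mj j = fun x => φj (fun k => x (j.succAbove k)) := by
            funext x
            simp only [hMjdef, hφjdef]
            refine lintegral_congr fun s => ?_
            rw [deleteInsert_eq]
          rw [hMjφ, lmarg_compl j φj hφj]
          have hfub : ∫⁻ w : Fin M → ℝ, φj w
              = ∫⁻ p : (Fin M → ℝ) × ℝ, F j (Fin.snoc p.1 p.2) ^ r := by
            rw [Measure.volume_eq_prod, lintegral_prod _
              (show Measurable fun p : (Fin M → ℝ) × ℝ => F j (Fin.snoc p.1 p.2) ^ r from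
                ((hF j).comp snocMP'.measurable).pow_const r).aemeasurable]
          rw [hfub, snocMP'.lintegral_comp ((hF j).pow_const r)]
  -- Assemble
  calc ∫⁻ p : (Fin (M+1) → ℝ) × ℝ,
        (∏ j, F j (deleteInsert j p.1 (p.2 + c j p.1))) * G p.1
      = ∫⁻ x, ∫⁻ t, (∏ j, F j (deleteInsert j x (t + c j x))) * G x := hA
    _ ≤ ∫⁻ x, G x * ∏ j, Mj j x ^ r⁻¹ := lintegral_mono stepB
    _ ≤ (∫⁻ y, G y ^ r) ^ r⁻¹ * (∫⁻ x, ∏ j, Mj j x ^ (M:ℝ)⁻¹) ^ ((M:ℝ)/r) := stepC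
    _ ≤ (∫⁻ y, G y ^ r) ^ r⁻¹ * (∏ j, (∫⁻ y, F j y ^ r) ^ (M:ℝ)⁻¹) ^ ((M:ℝ)/r) :=
        mul_le_mul_right (ENNReal.rpow_le_rpow stepD (div_nonneg hMpos.le (by positivity))) _
    _ = (∫⁻ y, G y ^ r) ^ r⁻¹ * ∏ j, (∫⁻ y, F j y ^ r) ^ r⁻¹ := by
        congr 1
        rw [← ENNReal.prod_rpow_of_nonneg (div_nonneg hMpos.le (by positivity))]
        refine Finset.prod_congr rfl fun j _ => ?_
        rw [← ENNReal.rpow_mul]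
        congr 1
        rw [hr]; field_simp
    _ = (∏ j, (∫⁻ y, F j y ^ r) ^ r⁻¹) * (∫⁻ y, G y ^ r) ^ r⁻¹ := mul_comm _ _

theorem tshift_measurable (d n : ℕ) (α : Fin n → ℝ) (j : Fin (d + 2*n)) :
    Measurable (tshift d n α j) := by
  by_cases h : (j : ℕ) < d
  · show Measurable fun x => tshift d n α j x
    simp only [tshift, dif_pos h]
    exact measurable_const
  · show Measurable fun x => tshift d n α j x
    simp only [tshift, dif_neg h]
    exact (measurable_const.mul (measurable_pi_apply _)).mul (measurable_pi_apply _)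

/-- **Nonlinear Loomis–Whitney inequality on `H(d,α)` with constant 1**
(Proposition 1.9 of the paper): for all non-negative measurable
`f₁, …, f_{d+2n+1}` on `ℝ^{d+2n}`,
`∫ ∏_{j=1}^{d+2n+1} f_j ∘ π_j ≤ ∏_{j=1}^{d+2n+1} ‖f_j‖_{d+2n}`. -/
theorem nonlinear_loomis_whitney_corank_one (d n : ℕ) (hn : 1 ≤ n)
    (α : Fin n → ℝ) (hα : ∀ i, 0 < α i) (hmono : Monotone α)
    (f : Fin (d + 2*n + 1) → (Fin (d + 2*n) → ℝ) → ℝ)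
    (hf : ∀ j, Measurable (f j)) (hf0 : ∀ j y, 0 ≤ f j y) :
    ∫⁻ p : (Fin (d + 2*n) → ℝ) × ℝ,
        ∏ j, ENNReal.ofReal (f j (carnotProjFull d n α j p)) ≤
      ∏ j : Fin (d + 2*n + 1), eLpNorm (f j) ((d + 2*n : ℕ) : ℝ≥0∞) volume := by
  have hm : 2 ≤ d + 2*n := by omega
  have hFm : ∀ j : Fin (d + 2*n),
      Measurable (fun y => ENNReal.ofReal (f (Fin.castSucc j) y)) := fun j =>
    ENNReal.measurable_ofReal.comp (hf _)
  have hGm : Measurable (fun y => ENNReal.ofReal (f (Fin.last (d + 2*n)) y)) :=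
    ENNReal.measurable_ofReal.comp (hf _)
  have hsplit : ∀ p : (Fin (d + 2*n) → ℝ) × ℝ,
      (∏ j : Fin (d + 2*n + 1), ENNReal.ofReal (f j (carnotProjFull d n α j p)))
      = (∏ j : Fin (d + 2*n), ENNReal.ofReal
          (f (Fin.castSucc j) (deleteInsert j p.1 (p.2 + tshift d n α j p.1))))
        * ENNReal.ofReal (f (Fin.last (d + 2*n)) p.1) := by
    intro p
    rw [Fin.prod_univ_castSucc]
    congr 1
    · refine Finset.prod_congr rfl fun j _ => ?_
      congr 1
      rw [carnotProjFull,
        dif_pos (show ((j.castSucc : Fin (d + 2*n + 1)) : ℕ) < d + 2*n by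
          simpa using j.isLt)]
      rfl
    · congr 1
      rw [carnotProjFull, dif_neg (by simp)]
  have hnorm : ∀ j : Fin (d + 2*n + 1),
      eLpNorm (f j) ((d + 2*n : ℕ) : ℝ≥0∞) volume
        = (∫⁻ y, ENNReal.ofReal (f j y) ^ ((d + 2*n : ℕ) : ℝ))
            ^ (((d + 2*n : ℕ) : ℝ))⁻¹ := by
    intro j
    rw [eLpNorm_eq_lintegral_rpow_enorm_toReal
      (by exact_mod_cast Nat.cast_ne_zero.mpr (show d + 2*n ≠ 0 by omega))
      (ENNReal.natCast_ne_top _)]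
    rw [ENNReal.toReal_natCast, one_div]
    congr 1
    refine lintegral_congr fun y => ?_
    congr 1
    exact Real.enorm_eq_ofReal (hf0 j y)
  calc ∫⁻ p : (Fin (d + 2*n) → ℝ) × ℝ,
        ∏ j, ENNReal.ofReal (f j (carnotProjFull d n α j p))
      = ∫⁻ p : (Fin (d + 2*n) → ℝ) × ℝ,
          (∏ j : Fin (d + 2*n), ENNReal.ofReal
              (f (Fin.castSucc j) (deleteInsert j p.1 (p.2 + tshift d n α j p.1))))
            * ENNReal.ofReal (f (Fin.last (d + 2*n)) p.1) := lintegral_congr hsplit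
    _ ≤ (∏ j : Fin (d + 2*n), (∫⁻ y, ENNReal.ofReal (f (Fin.castSucc j) y)
              ^ ((d + 2*n : ℕ) : ℝ))
            ^ (((d + 2*n : ℕ) : ℝ))⁻¹)
          * (∫⁻ y, ENNReal.ofReal (f (Fin.last (d + 2*n)) y) ^ ((d + 2*n : ℕ) : ℝ))
              ^ (((d + 2*n : ℕ) : ℝ))⁻¹ :=
        master (d + 2*n) hm (fun j y => ENNReal.ofReal (f (Fin.castSucc j) y)) hFm
          (fun y => ENNReal.ofReal (f (Fin.last (d + 2*n)) y)) hGm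
          (tshift d n α) (tshift_measurable d n α)
    _ = ∏ j : Fin (d + 2*n + 1), eLpNorm (f j) ((d + 2*n : ℕ) : ℝ≥0∞) volume := by
        rw [Fin.prod_univ_castSucc]
        congr 1
        · exact Finset.prod_congr rfl fun j _ => (hnorm j.castSucc).symm
        · exact (hnorm (Fin.last _)).symm
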